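/- Fix s ∈ ℝ and set μ(t,θ) := Σ_{j=1}^N D_j(t) 𝔥(θ + τ_j) for t ∈ ℝ, θ ∈ [−τ_N, 0], where 𝔥 is the left-continuous Heaviside function (𝔥(τ) = 0 for τ ≤ 0, 𝔥(τ) = 1 for τ > 0). Define k : [s, s+τ_N] × [s, s+τ_N] → ℂ^{d×d} by k(t,τ) := μ(t, τ−t) − Σ_{j=1}^N D_j(t) for τ ∈ [s, t] and k(t,τ) := 0 for τ > t. Then k is a Stieltjes–Volterra kernel of type B^∞ on [s, s+τ_N] × [s, s+τ_N], and k(t,τ) = 0 whenever t − τ < τ_1. -/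

import Mathlib

open MeasureTheory Set
open scoped ENNReal NNReal
open scoped Matrix.Norms.L2Operator

noncomputable section

-- The Lebesgue–Stieltjes measure of a monotone function (zero if not monotone).
open scoped Classical in
noncomputable def monoMeasure (m : ℝ → ℝ) : Measure ℝ :=
  if h : Monotone m then h.stieltjesFunction.measure else 0

/-- The function `f` clamped to the interval `[c,e]`. -/
def clampOn (f : ℝ → ℝ) (c e : ℝ) : ℝ → ℝ := fun x => f (max c (min x e))

/-- Cumulative total variation of the clamped function. -/
def varFun (f : ℝ → ℝ) (c e : ℝ) : ℝ → ℝ :=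
  fun x => (eVariationOn (clampOn f c e) (Icc c x)).toReal

/-- Positive (Jordan) part. -/
def posPartFun (f : ℝ → ℝ) (c e : ℝ) : ℝ → ℝ :=
  fun x => (varFun f c e x + clampOn f c e x - f c) / 2

/-- Negative (Jordan) part. -/
def negPartFun (f : ℝ → ℝ) (c e : ℝ) : ℝ → ℝ :=
  fun x => (varFun f c e x - clampOn f c e x + f c) / 2

/-- Lebesgue–Stieltjes integral of `φ` against (the measure associated with the
restriction to `[c,e)` of) the function `f`, over `[c,e)`. -/
def lsIntIcoR (f : ℝ → ℝ) (c e : ℝ) (φ : ℝ → ℝ) : ℝ :=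
  (∫ x in Ico c e, φ x ∂(monoMeasure (posPartFun f c e))) -
  (∫ x in Ico c e, φ x ∂(monoMeasure (negPartFun f c e)))

/-- Same, over the open interval `(c,e)`. -/
def lsIntIooR (f : ℝ → ℝ) (c e : ℝ) (φ : ℝ → ℝ) : ℝ :=
  (∫ x in Ioo c e, φ x ∂(monoMeasure (posPartFun f c e))) -
  (∫ x in Ioo c e, φ x ∂(monoMeasure (negPartFun f c e)))

/-- Complex Lebesgue–Stieltjes integral `∫_{[c,e)} φ df`. -/
def lsIntIcoC (f : ℝ → ℂ) (c e : ℝ) (φ : ℝ → ℂ) : ℂ :=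
  (lsIntIcoR (fun x => (f x).re) c e (fun x => (φ x).re)
    - lsIntIcoR (fun x => (f x).im) c e (fun x => (φ x).im))
  + Complex.I * (lsIntIcoR (fun x => (f x).re) c e (fun x => (φ x).im)
    + lsIntIcoR (fun x => (f x).im) c e (fun x => (φ x).re))

def lsIntIooC (f : ℝ → ℂ) (c e : ℝ) (φ : ℝ → ℂ) : ℂ :=
  (lsIntIooR (fun x => (f x).re) c e (fun x => (φ x).re)
    - lsIntIooR (fun x => (f x).im) c e (fun x => (φ x).im))
  + Complex.I * (lsIntIooR (fun x => (f x).re) c e (fun x => (φ x).im)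
    + lsIntIooR (fun x => (f x).im) c e (fun x => (φ x).re))

/-- `∫_{[c,e)} dF(τ) G(τ)` for matrix-valued `F` (the integrator) and `G`. -/
def lsIntIcoMM {d : ℕ} (F : ℝ → Matrix (Fin d) (Fin d) ℂ) (c e : ℝ)
    (G : ℝ → Matrix (Fin d) (Fin d) ℂ) : Matrix (Fin d) (Fin d) ℂ :=
  Matrix.of fun i k => ∑ j, lsIntIcoC (fun τ => F τ i j) c e (fun τ => G τ j k)

/-- `∫_{[c,e)} dF(τ) g(τ)` for matrix-valued `F` and vector-valued `g`. -/
def lsIntIcoMV {d : ℕ} (F : ℝ → Matrix (Fin d) (Fin d) ℂ) (c e : ℝ)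
    (g : ℝ → Fin d → ℂ) : Fin d → ℂ :=
  fun i => ∑ j, lsIntIcoC (fun τ => F τ i j) c e (fun τ => g τ j)

def lsIntIooMV {d : ℕ} (F : ℝ → Matrix (Fin d) (Fin d) ℂ) (c e : ℝ)
    (g : ℝ → Fin d → ℂ) : Fin d → ℂ :=
  fun i => ∑ j, lsIntIooC (fun τ => F τ i j) c e (fun τ => g τ j)

instance matrixMeasurableSpace {d : ℕ} : MeasurableSpace (Matrix (Fin d) (Fin d) ℂ) :=
  inferInstanceAs (MeasurableSpace (Fin d → Fin d → ℂ))

/-- A Stieltjes–Volterra kernel of type `B^∞` on `[a,b] × [a,b]`. -/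
def IsSVKernel (d : ℕ) (a b : ℝ) (κ : ℝ → ℝ → Matrix (Fin d) (Fin d) ℂ) : Prop :=
  Measurable ((Icc a b ×ˢ Icc a b).restrict (fun p : ℝ × ℝ => κ p.1 p.2)) ∧
  (∀ t ∈ Icc a b, ∀ τ ∈ Icc a b, t ≤ τ → κ t τ = 0) ∧
  (∀ t ∈ Icc a b, ∀ x ∈ Icc a b, ContinuousWithinAt (κ t) (Icc a b ∩ Iio x) x) ∧
  (∃ C : ℝ, ∀ t ∈ Icc a b, eVariationOn (κ t) (Icc a b) ≤ ENNReal.ofReal C) ∧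
  (∀ ε > (0:ℝ), ∃ η > (0:ℝ), ∀ t ∈ Icc a b, ∀ τ ∈ Icc a b, 0 < t - τ → t - τ < η →
      eVariationOn (κ t) (Ico τ t) < ENNReal.ofReal ε)

/-- The norm `‖κ‖_{[a,b]} = sup_t ‖κ(t,·)‖_{BV([a,b])}` (base point `b`). -/
def KNorm (d : ℕ) (a b : ℝ) (κ : ℝ → ℝ → Matrix (Fin d) (Fin d) ℂ) : ℝ≥0∞ :=
  ⨆ t ∈ Icc a b, eVariationOn (κ t) (Icc a b)

/-- `ρ` is a resolvent of the kernel `κ`. -/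
def IsResolvent (d : ℕ) (a b : ℝ) (κ ρ : ℝ → ℝ → Matrix (Fin d) (Fin d) ℂ) : Prop :=
  IsSVKernel d a b ρ ∧
  ∀ t ∈ Icc a b, ∀ β ∈ Icc a b,
    ρ t β = -κ t β + lsIntIcoMM (κ t) β t (fun τ => ρ τ β)

/-- The left-continuous Heaviside function: `𝔥 x = 0` for `x ≤ 0` and `1` for `x > 0`. -/
noncomputable def lcHeaviside (x : ℝ) : ℝ := if 0 < x then 1 else 0


section VarHelpers

variable {E : Type*} [SeminormedAddCommGroup E]

lemma evar_zero_fun (s : Set ℝ) : eVariationOn (fun _ : ℝ => (0 : E)) s = 0 := by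
  apply eVariationOn.constant_on
  rintro x ⟨y, -, rfl⟩ z ⟨w, -, rfl⟩
  rfl

lemma evar_add_le (f g : ℝ → E) (s : Set ℝ) :
    eVariationOn (fun x => f x + g x) s ≤ eVariationOn f s + eVariationOn g s := by
  apply iSup_le
  rintro ⟨n, u, hu, us⟩
  calc (∑ i ∈ Finset.range n,
          edist (f (u (i + 1)) + g (u (i + 1))) (f (u i) + g (u i)))
      ≤ ∑ i ∈ Finset.range n,
          (edist (f (u (i + 1))) (f (u i)) + edist (g (u (i + 1))) (g (u i))) :=
        Finset.sum_le_sum fun i _ => edist_add_add_le _ _ _ _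
    _ = (∑ i ∈ Finset.range n, edist (f (u (i + 1))) (f (u i)))
        + ∑ i ∈ Finset.range n, edist (g (u (i + 1))) (g (u i)) :=
        Finset.sum_add_distrib
    _ ≤ _ := add_le_add (eVariationOn.sum_le (f := f) (n := n) hu us) (eVariationOn.sum_le (f := g) (n := n) hu us)

lemma evar_sum_le {ι : Type*} (t : Finset ι) (f : ι → ℝ → E) (s : Set ℝ) :
    eVariationOn (fun x => ∑ j ∈ t, f j x) s ≤ ∑ j ∈ t, eVariationOn (f j) s := by
  classical
  induction t using Finset.induction with
  | empty => simpa using (evar_zero_fun s).le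
  | @insert a t ha ih =>
    rw [Finset.sum_insert ha]
    have he : (fun x => ∑ j ∈ insert a t, f j x) = fun x => f a x + ∑ j ∈ t, f j x := by
      funext x; rw [Finset.sum_insert ha]
    rw [he]
    exact (evar_add_le _ _ _).trans (add_le_add le_rfl ih)

lemma evar_step_le (c : ℝ) (A : E) (s : Set ℝ) :
    eVariationOn (fun x => if x ≤ c then A else 0) s ≤ (‖A‖₊ : ENNReal) := by
  apply iSup_le
  rintro ⟨n, u, hu, -⟩
  set g : ℝ → E := fun x => if x ≤ c then A else 0 with hg
  suffices H : ∀ m : ℕ, (∑ i ∈ Finset.range m, edist (g (u (i + 1))) (g (u i))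
        ≤ (‖A‖₊ : ENNReal))
      ∧ (u m ≤ c → (∑ i ∈ Finset.range m, edist (g (u (i + 1))) (g (u i))) = 0) by
    exact (H n).1
  intro m
  induction m with
  | zero => exact ⟨by simp, fun _ => by simp⟩
  | succ m ih =>
    rw [Finset.sum_range_succ]
    by_cases h1 : u (m + 1) ≤ c
    · have h0 : u m ≤ c := le_trans (hu (Nat.le_succ m)) h1
      have hz : edist (g (u (m + 1))) (g (u m)) = 0 := by
        simp [hg, if_pos h1, if_pos h0]
      rw [ih.2 h0, hz, add_zero]
      exact ⟨zero_le, fun _ => rfl⟩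
    · constructor
      · by_cases h0 : u m ≤ c
        · rw [ih.2 h0, zero_add]
          have : edist (g (u (m + 1))) (g (u m)) = edist (0 : E) A := by
            rw [hg]; simp only [if_neg h1, if_pos h0]
          rw [this, edist_comm, edist_zero_right]
          exact le_rfl
        · have : edist (g (u (m + 1))) (g (u m)) = 0 := by
            simp [hg, if_neg h1, if_neg h0]
          rw [this, add_zero]
          exact ih.1
      · intro h; exact absurd h h1

end VarHelpers

/-- **The kernel of the difference-delay system is a Stieltjes–Volterra kernel of
type `B^∞`.**

With `μ(t,θ) = ∑ j, 𝔥(θ + τ_j) D_j(t)` (`𝔥` the left-continuous Heaviside function)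
and `k(t,τ) = μ(t, τ - t) - ∑_j D_j(t)` for `τ ∈ [s,t]`, `k(t,τ) = 0` for `τ > t`,
the function `k` is a Stieltjes–Volterra kernel of type `B^∞` on
`[s, s+τ_N] × [s, s+τ_N]`, and `k(t,τ) = 0` whenever `t - τ < τ_1`. -/
theorem delay_kernel_isSVKernel
    (d N : ℕ) (hd : 0 < d)
    (τ : Fin (N + 1) → ℝ) (hτpos : ∀ j, 0 < τ j) (hτmono : StrictMono τ)
    (D : Fin (N + 1) → ℝ → Matrix (Fin d) (Fin d) ℂ) (hD : ∀ j, Continuous (D j))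
    (s : ℝ)
    (k : ℝ → ℝ → Matrix (Fin d) (Fin d) ℂ)
    (hk : k = fun t τ' => if τ' ≤ t then
      (∑ j, lcHeaviside (τ' - t + τ j) • D j t) - ∑ j, D j t else 0) :
    IsSVKernel d s (s + τ (Fin.last N)) k ∧
    ∀ t ∈ Icc s (s + τ (Fin.last N)), ∀ τ' ∈ Icc s (s + τ (Fin.last N)),
      t - τ' < τ 0 → k t τ' = 0 := by
  have hτ0 : ∀ j, τ 0 ≤ τ j := fun j => hτmono.monotone (Fin.zero_le j)
  set a := s with ha
  set b := s + τ (Fin.last N) with hb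
  -- closed form for the kernel
  have kform : ∀ t x, k t x
      = ∑ j, (if x ≤ t - τ j then -(D j t) else (0 : Matrix (Fin d) (Fin d) ℂ)) := by
    intro t x
    rw [hk]
    by_cases hx : x ≤ t
    · simp only [if_pos hx]
      rw [← Finset.sum_sub_distrib]
      refine Finset.sum_congr rfl fun j _ => ?_
      by_cases hj : x ≤ t - τ j
      · have hne : ¬ (0 < x - t + τ j) := by linarith
        rw [lcHeaviside, if_neg hne, if_pos hj, zero_smul, zero_sub]
      · have hpos : 0 < x - t + τ j := by
          have := not_le.mp hj; linarith
        rw [lcHeaviside, if_pos hpos, if_neg hj, one_smul, sub_self]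
    · simp only [if_neg hx]
      refine (Finset.sum_eq_zero fun j _ => ?_).symm
      have := not_le.mp hx
      have hne : ¬ x ≤ t - τ j := by have := hτpos j; linarith
      rw [if_neg hne]
  -- the kernel vanishes when t - x < τ 0
  have kzero : ∀ t x : ℝ, t - x < τ 0 → k t x = 0 := by
    intro t x hlt
    rw [kform]
    refine Finset.sum_eq_zero fun j _ => ?_
    have hne : ¬ x ≤ t - τ j := by have := hτ0 j; push_neg; linarith
    rw [if_neg hne]
  refine ⟨⟨?_, ?_, ?_, ?_, ?_⟩, fun t _ x _ h => kzero t x h⟩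
  · -- measurability
    have hmeas : Measurable fun p : ℝ × ℝ => k p.1 p.2 := by
      have he : (fun p : ℝ × ℝ => k p.1 p.2)
          = fun p => ∑ j, (if p.2 ≤ p.1 - τ j then -(D j p.1)
              else (0 : Matrix (Fin d) (Fin d) ℂ)) := by
        funext p; exact kform p.1 p.2
      rw [he]
      refine measurable_pi_iff.mpr fun i => measurable_pi_iff.mpr fun l => ?_
      have he2 : (fun p : ℝ × ℝ => (∑ j, (if p.2 ≤ p.1 - τ j then -(D j p.1)
              else (0 : Matrix (Fin d) (Fin d) ℂ))) i l)
          = fun p : ℝ × ℝ => ∑ j, (if p.2 ≤ p.1 - τ j then -(D j p.1 i l) else 0) := by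
        funext p
        rw [Matrix.sum_apply]
        refine Finset.sum_congr rfl fun j _ => ?_
        by_cases hc : p.2 ≤ p.1 - τ j <;> simp [hc]
      rw [he2]
      refine Finset.measurable_sum _ fun j _ => ?_
      refine Measurable.ite ?_ ?_ measurable_const
      · exact measurableSet_le measurable_snd (measurable_fst.sub measurable_const)
      · have hcont : Continuous fun x : ℝ => -(D j x i l) := by
          exact ((continuous_apply l).comp ((continuous_apply i).comp (hD j))).neg
        exact (hcont.comp continuous_fst).measurable
    exact hmeas.comp measurable_subtype_coe
  · -- vanishing on and above the diagonal
    intro t _ x _ htx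
    exact kzero t x (by have := hτpos 0; linarith)
  · -- left continuity
    intro t _ x _
    have he : k t = fun y => ∑ j, (if y ≤ t - τ j then -(D j t)
        else (0 : Matrix (Fin d) (Fin d) ℂ)) := funext (kform t)
    rw [he]
    have : ∀ j : Fin (N + 1), ContinuousWithinAt
        (fun y => if y ≤ t - τ j then -(D j t) else (0 : Matrix (Fin d) (Fin d) ℂ))
        (Icc a b ∩ Iio x) x := by
      intro j
      by_cases hxc : x ≤ t - τ j
      · refine continuousWithinAt_const.congr (f := fun _ => -(D j t)) ?_ ?_
        · intro y hy
          have : y ≤ t - τ j := le_of_lt (lt_of_lt_of_le hy.2 hxc)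
          rw [if_pos this]
        · rw [if_pos hxc]
      · have hmem : Ioi (t - τ j) ∈ nhdsWithin x (Icc a b ∩ Iio x) :=
          mem_nhdsWithin_of_mem_nhds (Ioi_mem_nhds (not_le.mp hxc))
        refine ContinuousWithinAt.congr_of_eventuallyEq
          (continuousWithinAt_const (b := (0 : Matrix (Fin d) (Fin d) ℂ))) ?_ ?_
        · filter_upwards [hmem] with y hy
          rw [if_neg (not_le.mpr hy)]
        · rw [if_neg hxc]
    exact tendsto_finset_sum Finset.univ fun j _ => this j
  · -- uniform bound on the variation
    have hMj : ∀ j : Fin (N + 1), ∃ M : ℝ, ∀ x ∈ Icc a b, ‖D j x‖ ≤ M := fun j =>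
      isCompact_Icc.exists_bound_of_continuousOn (hD j).continuousOn
    choose M hM using hMj
    have hab : a ≤ b := by
      rw [hb]; have := hτpos (Fin.last N); linarith
    refine ⟨∑ j, M j, fun t ht => ?_⟩
    have hMnn : ∀ j, 0 ≤ M j := fun j => le_trans (norm_nonneg _) (hM j t ht)
    have h1 : eVariationOn (k t) (Icc a b)
        ≤ ∑ j, eVariationOn (fun y => if y ≤ t - τ j then -(D j t)
            else (0 : Matrix (Fin d) (Fin d) ℂ)) (Icc a b) := by
      rw [show k t = fun y => ∑ j, (if y ≤ t - τ j then -(D j t)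
          else (0 : Matrix (Fin d) (Fin d) ℂ)) from funext (kform t)]
      exact evar_sum_le _ _ _
    refine h1.trans ?_
    calc (∑ j, eVariationOn (fun y => if y ≤ t - τ j then -(D j t)
            else (0 : Matrix (Fin d) (Fin d) ℂ)) (Icc a b))
        ≤ ∑ j, ENNReal.ofReal (M j) := by
          refine Finset.sum_le_sum fun j _ => ?_
          refine (evar_step_le _ _ _).trans ?_
          rw [← ENNReal.ofReal_coe_nnreal, coe_nnnorm, norm_neg]
          exact ENNReal.ofReal_le_ofReal (hM j t ht)
      _ = ENNReal.ofReal (∑ j, M j) :=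
          (ENNReal.ofReal_sum_of_nonneg fun j _ => hMnn j).symm
  · -- uniform smallness of the variation near the diagonal
    intro ε hε
    refine ⟨τ 0, hτpos 0, fun t _ x _ h1 h2 => ?_⟩
    have hz : eVariationOn (k t) (Ico x t) = 0 := by
      apply eVariationOn.constant_on
      rintro _ ⟨y, hy, rfl⟩ _ ⟨z, hz', rfl⟩
      rw [kzero t y (by have := hy.1; linarith), kzero t z (by have := hz'.1; linarith)]
    rw [hz]
    exact ENNReal.ofReal_pos.mpr hε


end
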